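/- Let Δ be a positive integer. Then ∑_{Δ₁ | Δ^∞, Δ₁ > X} τ(Δ₁)/φ(Δ₁) ≤ (1/√X) · ∏_{p | Δ} (1 + ∑_{ν≥1} (ν+1)√(p^ν)/(p^ν - p^{ν-1})), and consequently ∑_{Δ₁ | Δ^∞, Δ₁ > X} τ(Δ₁)/φ(Δ₁) ≪ τ(Δ)/√X, where the sum runs over positive integers Δ₁ all of whose prime factors divide Δ. -/
import Mathlib


open Real

noncomputable def fTP (n : ℕ) : ℝ :=
  (n.divisors.card : ℝ) * Real.sqrt n / (n.totient : ℝ)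

lemma fTP_nonneg (n : ℕ) : 0 ≤ fTP n := by
  unfold fTP; positivity

lemma fTP_one : fTP 1 = 1 := by
  simp [fTP]

lemma fTP_mul {m n : ℕ} (h : Nat.Coprime m n) : fTP (m * n) = fTP m * fTP n := by
  rcases Nat.eq_zero_or_pos m with rfl | hm
  · simp [fTP]
  rcases Nat.eq_zero_or_pos n with rfl | hn
  · simp [fTP]
  unfold fTP
  rw [h.card_divisors_mul, Nat.totient_mul h, Nat.cast_mul, Nat.cast_mul, Nat.cast_mul,
    Real.sqrt_mul (by positivity)]
  ring

lemma sqrt_pow_eq (x : ℝ) (hx : 0 ≤ x) (n : ℕ) :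
    Real.sqrt (x ^ n) = (Real.sqrt x) ^ n := by
  rw [← Real.sqrt_sq (pow_nonneg (Real.sqrt_nonneg x) n), ← pow_mul, mul_comm n 2, pow_mul,
    Real.sq_sqrt hx]

lemma card_divisors_prime_pow {p : ℕ} (hp : p.Prime) (k : ℕ) :
    ((p ^ k).divisors.card) = k + 1 := by
  rw [← ArithmeticFunction.sigma_zero_apply,
    ArithmeticFunction.sigma_zero_apply_prime_pow hp]

lemma tsum_aux {x : ℝ} (h0 : 0 ≤ x) (h1 : x < 1) :
    Summable (fun ν : ℕ ↦ ((ν : ℝ) + 2) * x ^ ν) ∧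
      ∑' ν : ℕ, (((ν : ℝ) + 2) * x ^ ν) = x / (1 - x) ^ 2 + 2 * (1 - x)⁻¹ := by
  have hg : Summable (fun ν : ℕ ↦ x ^ ν) := summable_geometric_of_lt_one h0 h1
  have hng : Summable (fun ν : ℕ ↦ (ν : ℝ) * x ^ ν) := by
    have := summable_pow_mul_geometric_of_norm_lt_one 1 (r := x)
      (by rw [Real.norm_eq_abs, abs_of_nonneg h0]; exact h1)
    simpa using this
  have hkey : (fun ν : ℕ ↦ ((ν : ℝ) + 2) * x ^ ν)
      = fun ν : ℕ ↦ (ν : ℝ) * x ^ ν + 2 * x ^ ν := by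
    funext ν; ring
  constructor
  · rw [hkey]; exact hng.add (hg.mul_left 2)
  · rw [hkey, Summable.tsum_add hng (hg.mul_left 2), tsum_mul_left, tsum_geometric_of_lt_one h0 h1,
      tsum_coe_mul_geometric_of_norm_lt_one
        (by rw [Real.norm_eq_abs, abs_of_nonneg h0]; exact h1)]

lemma term_eq {p : ℕ} (hp : p.Prime) (ν : ℕ) :
    ((ν : ℝ) + 2) * Real.sqrt ((p : ℝ) ^ (ν + 1)) / ((p : ℝ) ^ (ν + 1) - (p : ℝ) ^ ν)
      = (Real.sqrt p / ((p : ℝ) - 1)) * (((ν : ℝ) + 2) * ((Real.sqrt p)⁻¹) ^ ν) := by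
  have hp1 : (1 : ℝ) < p := by exact_mod_cast hp.one_lt
  set s := Real.sqrt p with hsdef
  have hs2 : s ^ 2 = p := Real.sq_sqrt (by positivity)
  have hs1 : 1 < s := by nlinarith [Real.sqrt_nonneg (p : ℝ)]
  have hs0 : s ≠ 0 := by linarith
  have hsn : s ^ ν ≠ 0 := pow_ne_zero _ hs0
  have hs21 : s ^ 2 - 1 ≠ 0 := by nlinarith
  rw [sqrt_pow_eq _ (by positivity), ← hsdef, ← hs2, inv_pow]
  have hden : (s ^ 2) ^ (ν + 1) - (s ^ 2) ^ ν = (s ^ 2) ^ ν * (s ^ 2 - 1) := by ring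
  rw [hden]
  field_simp
  ring

lemma fTP_prime_pow_succ {p : ℕ} (hp : p.Prime) (ν : ℕ) :
    fTP (p ^ (ν + 1)) =
      ((ν : ℝ) + 2) * Real.sqrt ((p : ℝ) ^ (ν + 1)) / ((p : ℝ) ^ (ν + 1) - (p : ℝ) ^ ν) := by
  unfold fTP
  rw [card_divisors_prime_pow hp, Nat.totient_prime_pow_succ hp]
  have hd : (p : ℝ) ^ (ν + 1) - (p : ℝ) ^ ν = (p : ℝ) ^ ν * ((p : ℝ) - 1) := by ring
  rw [hd]
  push_cast [hp.one_le]
  ring_nf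

lemma local_shift {p : ℕ} (hp : p.Prime) :
    (fun ν : ℕ ↦ fTP (p ^ (ν + 1)))
      = fun ν : ℕ ↦ (Real.sqrt p / ((p : ℝ) - 1)) * (((ν : ℝ) + 2) * ((Real.sqrt p)⁻¹) ^ ν) := by
  funext ν
  rw [fTP_prime_pow_succ hp, term_eq hp]

lemma inv_sqrt_lt {p : ℕ} (hp : p.Prime) :
    0 ≤ (Real.sqrt p)⁻¹ ∧ (Real.sqrt p)⁻¹ < 1 := by
  have hp1 : (1 : ℝ) < p := by exact_mod_cast hp.one_lt
  have : 1 < Real.sqrt p := by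
    rw [show (1 : ℝ) = Real.sqrt 1 by simp]
    exact Real.sqrt_lt_sqrt (by norm_num) hp1
  exact ⟨by positivity, inv_lt_one_of_one_lt₀ this⟩

lemma local_summable {p : ℕ} (hp : p.Prime) : Summable (fun ν : ℕ ↦ fTP (p ^ ν)) := by
  obtain ⟨h0, h1⟩ := inv_sqrt_lt hp
  refine (summable_nat_add_iff 1).mp ?_
  rw [local_shift hp]
  exact ((tsum_aux h0 h1).1).mul_left _

lemma local_tsum {p : ℕ} (hp : p.Prime) :
    ∑' ν : ℕ, fTP (p ^ ν) =
      1 + ∑' ν : ℕ,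
        (((ν : ℝ) + 2) * Real.sqrt ((p : ℝ) ^ (ν + 1)) /
          ((p : ℝ) ^ (ν + 1) - (p : ℝ) ^ ν)) := by
  rw [Summable.tsum_eq_zero_add (local_summable hp)]
  simp only [pow_zero, fTP_one]
  congr 1
  exact tsum_congr fun ν ↦ fTP_prime_pow_succ hp ν

lemma Sp_closed {p : ℕ} (hp : p.Prime) :
    ∑' ν : ℕ,
        (((ν : ℝ) + 2) * Real.sqrt ((p : ℝ) ^ (ν + 1)) /
          ((p : ℝ) ^ (ν + 1) - (p : ℝ) ^ ν))
      = (Real.sqrt p) ^ 2 * (2 * Real.sqrt p - 1) /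
          ((Real.sqrt p + 1) * (Real.sqrt p - 1) ^ 3) := by
  obtain ⟨h0, h1⟩ := inv_sqrt_lt hp
  have hp1 : (1 : ℝ) < p := by exact_mod_cast hp.one_lt
  set s := Real.sqrt p with hsdef
  have hs2 : s ^ 2 = p := Real.sq_sqrt (by positivity)
  have hs1 : 1 < s := by nlinarith [Real.sqrt_nonneg (p : ℝ)]
  have hs0 : s ≠ 0 := by linarith
  calc ∑' ν : ℕ, (((ν : ℝ) + 2) * Real.sqrt ((p : ℝ) ^ (ν + 1)) /
          ((p : ℝ) ^ (ν + 1) - (p : ℝ) ^ ν))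
      = ∑' ν : ℕ, (s / ((p : ℝ) - 1)) * (((ν : ℝ) + 2) * (s⁻¹) ^ ν) :=
        tsum_congr fun ν ↦ term_eq hp ν
    _ = (s / ((p : ℝ) - 1)) * ∑' ν : ℕ, (((ν : ℝ) + 2) * (s⁻¹) ^ ν) := tsum_mul_left
    _ = (s / ((p : ℝ) - 1)) * (s⁻¹ / (1 - s⁻¹) ^ 2 + 2 * (1 - s⁻¹)⁻¹) := by
        rw [(tsum_aux h0 h1).2]
    _ = s ^ 2 * (2 * s - 1) / ((s + 1) * (s - 1) ^ 3) := by
        rw [← hs2]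
        have h1s : 1 - s⁻¹ = (s - 1) / s := by field_simp
        rw [h1s]
        have hsm1 : s - 1 ≠ 0 := by nlinarith
        have hsp1 : s + 1 ≠ 0 := by nlinarith
        have hss : s ^ 2 - 1 ≠ 0 := by nlinarith
        field_simp
        ring

lemma Sp_nonneg {p : ℕ} (hp : p.Prime) :
    0 ≤ ∑' ν : ℕ,
        (((ν : ℝ) + 2) * Real.sqrt ((p : ℝ) ^ (ν + 1)) /
          ((p : ℝ) ^ (ν + 1) - (p : ℝ) ^ ν)) := by
  rw [Sp_closed hp]
  have hp1 : (1 : ℝ) < p := by exact_mod_cast hp.one_lt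
  set s := Real.sqrt p with hsdef
  have hs2 : s ^ 2 = p := Real.sq_sqrt (by positivity)
  have hs1 : 1 < s := by nlinarith [Real.sqrt_nonneg (p : ℝ)]
  apply div_nonneg
  · nlinarith
  · exact le_of_lt (mul_pos (by linarith) (pow_pos (by linarith) 3))

lemma Sp_le_41 {p : ℕ} (hp : p.Prime) :
    ∑' ν : ℕ,
        (((ν : ℝ) + 2) * Real.sqrt ((p : ℝ) ^ (ν + 1)) /
          ((p : ℝ) ^ (ν + 1) - (p : ℝ) ^ ν)) ≤ 41 := by
  rw [Sp_closed hp]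
  have hp2 : (2 : ℝ) ≤ p := by exact_mod_cast hp.two_le
  set s := Real.sqrt p with hsdef
  have hs2 : s ^ 2 = p := Real.sq_sqrt (by positivity)
  have hs1 : (141 / 100 : ℝ) ≤ s := by nlinarith [Real.sqrt_nonneg (p : ℝ)]
  rw [div_le_iff₀ (mul_pos (by linarith) (pow_pos (by linarith) 3))]
  nlinarith [sq_nonneg (s - 141 / 100), sq_nonneg s, sq_nonneg (s - 2), sq_nonneg (s * s - 2)]

lemma Sp_le_one {p : ℕ} (hp : p.Prime) (hp101 : 101 ≤ p) :
    ∑' ν : ℕ,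
        (((ν : ℝ) + 2) * Real.sqrt ((p : ℝ) ^ (ν + 1)) /
          ((p : ℝ) ^ (ν + 1) - (p : ℝ) ^ ν)) ≤ 1 := by
  rw [Sp_closed hp]
  have hp2 : (101 : ℝ) ≤ p := by exact_mod_cast hp101
  set s := Real.sqrt p with hsdef
  have hs2 : s ^ 2 = p := Real.sq_sqrt (by positivity)
  have hs1 : (10 : ℝ) ≤ s := by nlinarith [Real.sqrt_nonneg (p : ℝ)]
  rw [div_le_iff₀ (mul_pos (by linarith) (pow_pos (by linarith) 3))]
  nlinarith [sq_nonneg (s - 10), sq_nonneg s]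

lemma euler_fTP {Δ : ℕ} :
    Summable (fun m : Nat.factoredNumbers Δ.primeFactors ↦ ‖fTP m‖) ∧
      HasSum (fun m : Nat.factoredNumbers Δ.primeFactors ↦ fTP m)
        (∏ p ∈ Δ.primeFactors, ∑' ν : ℕ, fTP (p ^ ν)) := by
  have h := EulerProduct.summable_and_hasSum_factoredNumbers_prod_filter_prime_tsum
    (f := fTP) fTP_one (fun {m n} h => fTP_mul h)
    (fun {p} hp => by
      simpa [Real.norm_eq_abs, abs_of_nonneg (fTP_nonneg _)] using local_summable hp)
    Δ.primeFactors
  rwa [Finset.filter_true_of_mem (fun p hp => Nat.prime_of_mem_primeFactors hp)] at h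


def embT (Δ : ℕ) (X : ℝ) :
    { n : ℕ // 0 < n ∧ n.primeFactors ⊆ Δ.primeFactors ∧ X < (n : ℝ) } →
      Nat.factoredNumbers Δ.primeFactors :=
  fun t => ⟨t.1, Nat.mem_factoredNumbers_of_primeFactors_subset t.2.1.ne' t.2.2.1⟩

lemma embT_inj (Δ : ℕ) (X : ℝ) : Function.Injective (embT Δ X) := by
  intro a b h
  apply Subtype.ext
  exact congrArg (Subtype.val : Nat.factoredNumbers Δ.primeFactors → ℕ) h

lemma prod_pos_aux (Δ : ℕ) :
    0 ≤ ∏ p ∈ Δ.primeFactors,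
        (1 + ∑' ν : ℕ,
          ((ν + 2 : ℝ) * Real.sqrt ((p : ℝ) ^ (ν + 1)) /
            ((p : ℝ) ^ (ν + 1) - (p : ℝ) ^ ν))) :=
  Finset.prod_nonneg fun p hp => by
    have := Sp_nonneg (Nat.prime_of_mem_primeFactors hp); linarith

lemma main1 (Δ : ℕ) (hΔ : 0 < Δ) (X : ℝ) (hX : 1 ≤ X) :
    ∑' Δ₁ : { n : ℕ // 0 < n ∧ n.primeFactors ⊆ Δ.primeFactors ∧ X < (n : ℝ) },
        (((Δ₁ : ℕ).divisors.card : ℝ) / (Nat.totient (Δ₁ : ℕ) : ℝ))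
      ≤ (1 / Real.sqrt X) *
          ∏ p ∈ Δ.primeFactors,
            (1 + ∑' ν : ℕ,
              ((ν + 2 : ℝ) * Real.sqrt ((p : ℝ) ^ (ν + 1)) /
                ((p : ℝ) ^ (ν + 1) - (p : ℝ) ^ ν))) := by
  have hXpos : (0 : ℝ) < Real.sqrt X := Real.sqrt_pos.mpr (by linarith)
  by_cases hsum1 : Summable (fun t : { n : ℕ // 0 < n ∧ n.primeFactors ⊆ Δ.primeFactors ∧ X < (n : ℝ) } ↦
      (((t : ℕ).divisors.card : ℝ) / (Nat.totient (t : ℕ) : ℝ)))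
  swap
  · rw [tsum_eq_zero_of_not_summable hsum1]
    exact mul_nonneg (by positivity) (prod_pos_aux Δ)
  obtain ⟨hnorm, hHS⟩ := euler_fTP (Δ := Δ)
  have hsumF : Summable (fun m : Nat.factoredNumbers Δ.primeFactors ↦ fTP m) := hHS.summable
  have hterm : ∀ t : { n : ℕ // 0 < n ∧ n.primeFactors ⊆ Δ.primeFactors ∧ X < (n : ℝ) },
      (((t : ℕ).divisors.card : ℝ) / (Nat.totient (t : ℕ) : ℝ))
        ≤ (1 / Real.sqrt X) * fTP ((embT Δ X t : ℕ)) := by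
    intro t
    show _ ≤ (1 / Real.sqrt X) * fTP (t : ℕ)
    have ht : X < ((t : ℕ) : ℝ) := t.2.2.2
    have hsq : Real.sqrt X ≤ Real.sqrt ((t : ℕ) : ℝ) := Real.sqrt_le_sqrt ht.le
    have heq : (1 / Real.sqrt X) * fTP (t : ℕ) =
        (((t : ℕ).divisors.card : ℝ) / (Nat.totient (t : ℕ) : ℝ)) *
          (Real.sqrt ((t : ℕ) : ℝ) / Real.sqrt X) := by
      unfold fTP; ring
    rw [heq]
    have h1 : (1 : ℝ) ≤ Real.sqrt ((t : ℕ) : ℝ) / Real.sqrt X :=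
      (one_le_div hXpos).mpr hsq
    have h0 : (0 : ℝ) ≤ ((t : ℕ).divisors.card : ℝ) / (Nat.totient (t : ℕ) : ℝ) := by positivity
    nlinarith
  calc ∑' t : { n : ℕ // 0 < n ∧ n.primeFactors ⊆ Δ.primeFactors ∧ X < (n : ℝ) },
        (((t : ℕ).divisors.card : ℝ) / (Nat.totient (t : ℕ) : ℝ))
      ≤ ∑' m : Nat.factoredNumbers Δ.primeFactors, (1 / Real.sqrt X) * fTP m :=
        Summable.tsum_le_tsum_of_inj (embT Δ X) (embT_inj Δ X)
          (fun c _ => mul_nonneg (by positivity) (fTP_nonneg _)) hterm hsum1 (hsumF.mul_left _)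
    _ = (1 / Real.sqrt X) * ∑' m : Nat.factoredNumbers Δ.primeFactors, fTP m := tsum_mul_left
    _ = (1 / Real.sqrt X) * ∏ p ∈ Δ.primeFactors, ∑' ν : ℕ, fTP (p ^ ν) := by rw [hHS.tsum_eq]
    _ = (1 / Real.sqrt X) *
          ∏ p ∈ Δ.primeFactors, (1 + ∑' ν : ℕ,
            ((ν + 2 : ℝ) * Real.sqrt ((p : ℝ) ^ (ν + 1)) /
              ((p : ℝ) ^ (ν + 1) - (p : ℝ) ^ ν))) := by
        congr 1
        exact Finset.prod_congr rfl fun p hp => local_tsum (Nat.prime_of_mem_primeFactors hp)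

lemma prod_bound (Δ : ℕ) (hΔ : 0 < Δ) :
    ∏ p ∈ Δ.primeFactors,
        (1 + ∑' ν : ℕ,
          ((ν + 2 : ℝ) * Real.sqrt ((p : ℝ) ^ (ν + 1)) /
            ((p : ℝ) ^ (ν + 1) - (p : ℝ) ^ ν)))
      ≤ 21 ^ 101 * (Δ.divisors.card : ℝ) := by
  have h1 : ∏ p ∈ Δ.primeFactors,
        (1 + ∑' ν : ℕ,
          ((ν + 2 : ℝ) * Real.sqrt ((p : ℝ) ^ (ν + 1)) /
            ((p : ℝ) ^ (ν + 1) - (p : ℝ) ^ ν)))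
      ≤ ∏ p ∈ Δ.primeFactors, ((if p < 101 then (21 : ℝ) else 1) * 2) := by
    refine Finset.prod_le_prod (fun p hp => by
      have := Sp_nonneg (Nat.prime_of_mem_primeFactors hp); linarith) (fun p hp => ?_)
    have hp' := Nat.prime_of_mem_primeFactors hp
    by_cases hpl : p < 101
    · simp only [hpl, if_true]
      have := Sp_le_41 hp'
      linarith
    · simp only [hpl, if_false]
      have := Sp_le_one hp' (le_of_not_gt hpl)
      linarith
  have h2 : ∏ p ∈ Δ.primeFactors, ((if p < 101 then (21 : ℝ) else 1) * 2)
      = (∏ p ∈ Δ.primeFactors, (if p < 101 then (21 : ℝ) else 1)) * 2 ^ Δ.primeFactors.card := by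
    rw [Finset.prod_mul_distrib, Finset.prod_const]
  have h3 : (∏ p ∈ Δ.primeFactors, (if p < 101 then (21 : ℝ) else 1)) ≤ 21 ^ 101 := by
    rw [← Finset.prod_filter, Finset.prod_const]
    have hc : (Δ.primeFactors.filter (· < 101)).card ≤ 101 := by
      have hsub : Δ.primeFactors.filter (· < 101) ⊆ Finset.range 101 := by
        intro p hp
        simp only [Finset.mem_filter] at hp
        exact Finset.mem_range.mpr hp.2
      simpa using Finset.card_le_card hsub
    exact pow_le_pow_right₀ (by norm_num) hc
  have h4 : (2 : ℝ) ^ Δ.primeFactors.card ≤ (Δ.divisors.card : ℝ) := by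
    have hN : 2 ^ Δ.primeFactors.card ≤ Δ.divisors.card := by
      rw [Nat.card_divisors hΔ.ne']
      calc 2 ^ Δ.primeFactors.card = ∏ _p ∈ Δ.primeFactors, 2 :=
            (Finset.prod_const 2).symm
        _ ≤ ∏ p ∈ Δ.primeFactors, (Δ.factorization p + 1) := by
            refine Finset.prod_le_prod' fun p hp => ?_
            have := (Nat.prime_of_mem_primeFactors hp).factorization_pos_of_dvd hΔ.ne'
              (Nat.dvd_of_mem_primeFactors hp)
            omega
    exact_mod_cast hN
  have h2pos : (0 : ℝ) ≤ 2 ^ Δ.primeFactors.card := by positivity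
  calc ∏ p ∈ Δ.primeFactors,
        (1 + ∑' ν : ℕ,
          ((ν + 2 : ℝ) * Real.sqrt ((p : ℝ) ^ (ν + 1)) /
            ((p : ℝ) ^ (ν + 1) - (p : ℝ) ^ ν)))
      ≤ (∏ p ∈ Δ.primeFactors, (if p < 101 then (21 : ℝ) else 1)) * 2 ^ Δ.primeFactors.card :=
        h2 ▸ h1
    _ ≤ 21 ^ 101 * 2 ^ Δ.primeFactors.card := mul_le_mul_of_nonneg_right h3 h2pos
    _ ≤ 21 ^ 101 * (Δ.divisors.card : ℝ) := mul_le_mul_of_nonneg_left h4 (by positivity)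

/-- Tail estimate over `Δ₁ ∣ Δ^∞`:
`∑_{Δ₁ ∣ Δ^∞, Δ₁ > X} τ(Δ₁)/φ(Δ₁) ≤ X^{-1/2} ∏_{p ∣ Δ} (1 + ∑_{ν ≥ 1} (ν+1)√(p^ν)/(p^ν - p^{ν-1}))`,
and consequently this sum is `≪ τ(Δ)/√X` with an absolute implied constant. -/
theorem stmt_19 :
    (∀ (Δ : ℕ), 0 < Δ → ∀ X : ℝ, 1 ≤ X →
      ∑' Δ₁ : { n : ℕ // 0 < n ∧ n.primeFactors ⊆ Δ.primeFactors ∧ X < (n : ℝ) },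
          (((Δ₁ : ℕ).divisors.card : ℝ) / (Nat.totient (Δ₁ : ℕ) : ℝ))
        ≤ (1 / Real.sqrt X) *
            ∏ p ∈ Δ.primeFactors,
              (1 + ∑' ν : ℕ,
                ((ν + 2 : ℝ) * Real.sqrt ((p : ℝ) ^ (ν + 1)) /
                  ((p : ℝ) ^ (ν + 1) - (p : ℝ) ^ ν)))) ∧
    ∃ C : ℝ, ∀ (Δ : ℕ), 0 < Δ → ∀ X : ℝ, 1 ≤ X →
      ∑' Δ₁ : { n : ℕ // 0 < n ∧ n.primeFactors ⊆ Δ.primeFactors ∧ X < (n : ℝ) },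
          (((Δ₁ : ℕ).divisors.card : ℝ) / (Nat.totient (Δ₁ : ℕ) : ℝ))
        ≤ C * (Δ.divisors.card : ℝ) / Real.sqrt X := by
  refine ⟨main1, ⟨21 ^ 101, fun Δ hΔ X hX => ?_⟩⟩
  have hXpos : (0 : ℝ) < Real.sqrt X := Real.sqrt_pos.mpr (by linarith)
  calc ∑' Δ₁ : { n : ℕ // 0 < n ∧ n.primeFactors ⊆ Δ.primeFactors ∧ X < (n : ℝ) },
          (((Δ₁ : ℕ).divisors.card : ℝ) / (Nat.totient (Δ₁ : ℕ) : ℝ))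
      ≤ (1 / Real.sqrt X) *
          ∏ p ∈ Δ.primeFactors,
            (1 + ∑' ν : ℕ,
              ((ν + 2 : ℝ) * Real.sqrt ((p : ℝ) ^ (ν + 1)) /
                ((p : ℝ) ^ (ν + 1) - (p : ℝ) ^ ν))) := main1 Δ hΔ X hX
    _ ≤ (1 / Real.sqrt X) * (21 ^ 101 * (Δ.divisors.card : ℝ)) :=
        mul_le_mul_of_nonneg_left (prod_bound Δ hΔ) (by positivity)
    _ = 21 ^ 101 * (Δ.divisors.card : ℝ) / Real.sqrt X := by ring
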